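/- In the symmetric-algorithm setting, suppose the algorithm is (ε, ν)-stable for some ε ≥ 0 and ν ∈ (0,1), and suppose that, almost surely, the n+1 extended leave-one-out errors r̃_i = |Y_i − A_n((X_j, Y_j)_{j ∈ {1,...,n+1}, j ≠ i})(X_i)|, i ∈ {1, ..., n+1}, are pairwise distinct. Let α satisfy 1/(n+1) + √ν ≤ α < 1. Then P(|Y − f̂(X)| ≤ q_{n,α}{r_i} − ε) ≤ 1 − α + 1/(n + 1) + 2√ν. -/

import Mathlib

open MeasureTheory ProbabilityTheory

/-- The `k`-th smallest value (1-indexed) among `v 0, ..., v (n-1)`. -/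
noncomputable def kthSmallest {n : ℕ} (k : ℕ) (v : Fin n → ℝ) : ℝ :=
  (Multiset.sort (Multiset.map v Finset.univ.val) (· ≤ ·)).getD (k - 1) 0

/-- For `β ≥ 1/(n+1)`, `q_{n,β}{v}` is the `⌈(1 − β)(n + 1)⌉`-th smallest value among
`v 0, ..., v (n-1)`. -/
noncomputable def empQuantile {n : ℕ} (β : ℝ) (v : Fin n → ℝ) : ℝ :=
  kthSmallest ⌈(1 - β) * ((n:ℝ) + 1)⌉₊ v

namespace Stmt18Aux

variable {n : ℕ}

lemma sort_length (v : Fin n → ℝ) :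
    (Multiset.sort (Multiset.map v Finset.univ.val) (· ≤ ·)).length = n := by
  rw [Multiset.length_sort, Multiset.card_map]
  simp

lemma countP_sort (v : Fin n → ℝ) (p : ℝ → Prop) [DecidablePred p] :
    List.countP (fun x => decide (p x)) (Multiset.sort (Multiset.map v Finset.univ.val) (· ≤ ·))
      = (Finset.univ.filter (fun i => p (v i))).card := by
  have h1 : Multiset.countP p
      (↑(Multiset.sort (Multiset.map v Finset.univ.val) (· ≤ ·)) : Multiset ℝ)
      = Multiset.countP p (Multiset.map v Finset.univ.val) := by
    rw [Multiset.sort_eq]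
  rw [Multiset.coe_countP] at h1
  rw [h1, Multiset.countP_map]
  rw [Finset.card_def, Finset.filter_val]

/-- Characterization: the k-th smallest is ≤ t iff at least k values are ≤ t. -/
lemma kthSmallest_le_iff (v : Fin n → ℝ) {k : ℕ} (hk1 : 1 ≤ k) (hk2 : k ≤ n) (t : ℝ) :
    kthSmallest k v ≤ t ↔ k ≤ (Finset.univ.filter (fun i => v i ≤ t)).card := by
  classical
  set l := Multiset.sort (Multiset.map v Finset.univ.val) (· ≤ ·) with hl
  have hcount : List.countP (fun x => decide (x ≤ t)) l
      = (Finset.univ.filter (fun i => v i ≤ t)).card := countP_sort v (fun x => x ≤ t)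
  have hlen : l.length = n := sort_length v
  have hsorted : List.Pairwise (· ≤ ·) l := Multiset.pairwise_sort _ _
  have hklt : k - 1 < l.length := by omega
  have hget : kthSmallest k v = l[k-1] := List.getD_eq_getElem l 0 hklt
  rw [← hcount]
  constructor
  · intro h
    have htake : List.countP (fun x => decide (x ≤ t)) (l.take k) = (l.take k).length := by
      rw [List.countP_eq_length]
      intro a ha
      rw [List.mem_take_iff_getElem] at ha
      obtain ⟨i, hi, hEq⟩ := ha
      simp only [decide_eq_true_eq]
      have h1 : l[i]'(by omega) ≤ l[k-1] := by
        have := hsorted.rel_get_of_le (a := ⟨i, by omega⟩) (b := ⟨k-1, hklt⟩)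
          (by simp only [Fin.mk_le_mk]; omega)
        simpa using this
      rw [← hEq]
      calc l[i]'(by omega) ≤ l[k-1] := h1
        _ ≤ t := by rw [← hget]; exact h
    have hsplit := List.countP_append (p := fun x => decide (x ≤ t)) (l₁ := l.take k) (l₂ := l.drop k)
    rw [List.take_append_drop] at hsplit
    have hlt : (l.take k).length = k := by rw [List.length_take]; omega
    omega
  · intro h
    by_contra hcon
    push_neg at hcon
    rw [hget] at hcon
    have hdrop : List.countP (fun x => decide (x ≤ t)) (l.drop (k-1)) = 0 := by
      rw [List.countP_eq_zero]
      intro a ha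
      obtain ⟨i, hi, hEq⟩ := List.mem_iff_getElem.1 ha
      have hi' : k - 1 + i < l.length := by
        have h2 := List.length_drop (i := k-1) (l := l)
        omega
      have hEq2 : a = l[(k-1)+i]'hi' := by rw [← hEq]; exact List.getElem_drop (xs := l)
      simp only [decide_eq_true_eq, not_le, hEq2]
      have : l[k-1] ≤ l[(k-1)+i]'hi' := by
        have := hsorted.rel_get_of_le (a := ⟨k-1, hklt⟩) (b := ⟨(k-1)+i, hi'⟩)
          (by simp only [Fin.mk_le_mk]; omega)
        simpa using this
      linarith
    have hsplit := List.countP_append (p := fun x => decide (x ≤ t)) (l₁ := l.take (k-1)) (l₂ := l.drop (k-1))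
    rw [List.take_append_drop] at hsplit
    have h1 : List.countP (fun x => decide (x ≤ t)) (l.take (k-1)) ≤ k - 1 := by
      calc _ ≤ (l.take (k-1)).length := List.countP_le_length
        _ ≤ k - 1 := by rw [List.length_take]; omega
    omega

/-- At most k-1 values are strictly less than the k-th smallest. -/
lemma card_lt_kthSmallest (v : Fin n → ℝ) {k : ℕ} (hk1 : 1 ≤ k) (hk2 : k ≤ n) :
    (Finset.univ.filter (fun i => v i < kthSmallest k v)).card ≤ k - 1 := by
  classical
  set l := Multiset.sort (Multiset.map v Finset.univ.val) (· ≤ ·) with hl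
  have hcount : List.countP (fun x => decide (x < kthSmallest k v)) l
      = (Finset.univ.filter (fun i => v i < kthSmallest k v)).card :=
    countP_sort v (fun x => x < kthSmallest k v)
  have hlen : l.length = n := sort_length v
  have hsorted : List.Pairwise (· ≤ ·) l := Multiset.pairwise_sort _ _
  have hklt : k - 1 < l.length := by omega
  have hget : kthSmallest k v = l[k-1] := List.getD_eq_getElem l 0 hklt
  rw [← hcount]
  have hdrop : List.countP (fun x => decide (x < kthSmallest k v)) (l.drop (k-1)) = 0 := by
    rw [List.countP_eq_zero]
    intro a ha
    obtain ⟨i, hi, hEq⟩ := List.mem_iff_getElem.1 ha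
    have hi' : k - 1 + i < l.length := by
      have h2 := List.length_drop (i := k-1) (l := l)
      omega
    have hEq2 : a = l[(k-1)+i]'hi' := by rw [← hEq]; exact List.getElem_drop (xs := l)
    simp only [decide_eq_true_eq, not_lt, hEq2, hget]
    have := hsorted.rel_get_of_le (a := ⟨k-1, hklt⟩) (b := ⟨(k-1)+i, hi'⟩)
      (by simp only [Fin.mk_le_mk]; omega)
    simpa using this
  have hsplit := List.countP_append (p := fun x => decide (x < kthSmallest k v)) (l₁ := l.take (k-1))
    (l₂ := l.drop (k-1))
  rw [List.take_append_drop] at hsplit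
  have h1 : List.countP (fun x => decide (x < kthSmallest k v)) (l.take (k-1)) ≤ k - 1 := by
    calc _ ≤ (l.take (k-1)).length := List.countP_le_length
      _ ≤ k - 1 := by rw [List.length_take]; omega
  omega

lemma kthSmallest_shift {n : ℕ} (v w : Fin n → ℝ) (ε : ℝ) {k B : ℕ}
    (hk1 : 1 ≤ k) (hkB : k + B ≤ n)
    (hB : (Finset.univ.filter (fun i => ¬ (v i ≤ w i + ε))).card ≤ B) :
    kthSmallest k v ≤ kthSmallest (k + B) w + ε := by
  classical
  set t := kthSmallest (k + B) w with ht
  have h1 : k + B ≤ (Finset.univ.filter (fun i => w i ≤ t)).card :=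
    (kthSmallest_le_iff w (by omega) hkB t).1 le_rfl
  rw [kthSmallest_le_iff v hk1 (by omega) (t + ε)]
  set A := Finset.univ.filter (fun i => w i ≤ t) with hA
  set Bad := Finset.univ.filter (fun i : Fin n => ¬ (v i ≤ w i + ε)) with hBad
  have hsub : A \ Bad ⊆ Finset.univ.filter (fun i => v i ≤ t + ε) := by
    intro i hi
    simp only [Finset.mem_sdiff, hA, hBad, Finset.mem_filter, Finset.mem_univ, true_and,
      not_not] at hi
    simp only [Finset.mem_filter, Finset.mem_univ, true_and]
    linarith [hi.1, hi.2]
  have h2 : A.card ≤ (A \ Bad).card + Bad.card := Finset.card_le_card_sdiff_add_card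
  have h3 := Finset.card_le_card hsub
  omega

lemma exists_perm_succAbove {n : ℕ} (f : Fin n → Fin (n+1)) (hf : Function.Injective f)
    (p : Fin (n+1)) (hp : ∀ j, f j ≠ p) :
    ∃ π : Equiv.Perm (Fin n), ∀ j, f j = p.succAbove (π j) := by
  choose h hh using fun j => Fin.exists_succAbove_eq (hp j)
  have hinj : Function.Injective h := fun a b hab => hf (by rw [← hh a, ← hh b, hab])
  exact ⟨Equiv.ofBijective h (Finite.injective_iff_bijective.1 hinj), fun j => (hh j).symm⟩

variable {𝒳 : Type*} [MeasurableSpace 𝒳]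

/-- Extended leave-one-out error functional. -/
noncomputable def extErr {N : ℕ} (An : (Fin N → 𝒳 × ℝ) → 𝒳 → ℝ)
    (v : Fin (N+1) → 𝒳 × ℝ) (i : Fin (N+1)) : ℝ :=
  |(v i).2 - An (fun k => v (i.succAbove k)) ((v i).1)|

omit [MeasurableSpace 𝒳] in
lemma extErr_comp_perm {N : ℕ} (An : (Fin N → 𝒳 × ℝ) → 𝒳 → ℝ)
    (hAnSymm : ∀ σ : Equiv.Perm (Fin N), ∀ D, An (D ∘ σ) = An D)
    (σ : Equiv.Perm (Fin (N+1))) (v : Fin (N+1) → 𝒳 × ℝ) (i : Fin (N+1)) :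
    extErr An (fun j => v (σ j)) i = extErr An v (σ i) := by
  unfold extErr
  obtain ⟨π, hπ⟩ : ∃ π : Equiv.Perm (Fin N), ∀ k, σ (i.succAbove k) = (σ i).succAbove (π k) :=
    exists_perm_succAbove _ (σ.injective.comp (Fin.succAbove_right_injective))
      _ (fun k hc => (Fin.succAbove_ne i k) (σ.injective hc))
  have harg : (fun k => v (σ (i.succAbove k))) = (fun k => v ((σ i).succAbove k)) ∘ π := by
    funext k; simp [hπ k]
  rw [harg, hAnSymm]

lemma extErr_meas {N : ℕ} (An : (Fin N → 𝒳 × ℝ) → 𝒳 → ℝ)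
    (hAnMeas : Measurable (fun p : (Fin N → 𝒳 × ℝ) × 𝒳 => An p.1 p.2)) (i : Fin (N+1)) :
    Measurable (fun v => extErr An v i) := by
  have h1 : Measurable (fun v : Fin (N+1) → 𝒳 × ℝ => v i) := measurable_pi_apply i
  have h2 : Measurable (fun v : Fin (N+1) → 𝒳 × ℝ => (fun k => v (i.succAbove k), (v i).1)) :=
    (measurable_pi_lambda _ (fun k => measurable_pi_apply (i.succAbove k))).prodMk h1.fst
  exact (h1.snd.sub (hAnMeas.comp h2)).abs

lemma rank_lt {N : ℕ} (g : Fin N → ℝ) {i j : Fin N} (hij : g i < g j) :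
    (Finset.univ.filter (fun k => g k ≤ g i)).card
      < (Finset.univ.filter (fun k => g k ≤ g j)).card := by
  classical
  apply Finset.card_lt_card
  have hsub : Finset.univ.filter (fun k => g k ≤ g i)
      ⊆ Finset.univ.filter (fun k => g k ≤ g j) := by
    intro k hk
    simp only [Finset.mem_filter, Finset.mem_univ, true_and] at hk ⊢
    exact le_trans hk hij.le
  rw [Finset.ssubset_iff_of_subset hsub]
  exact ⟨j, by simp, by simp [not_le.2 hij]⟩

lemma card_small_rank {N : ℕ} (g : Fin N → ℝ) (hg : ∀ i j, i ≠ j → g i ≠ g j) (K : ℕ) :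
    (Finset.univ.filter (fun i =>
      (Finset.univ.filter (fun k => g k ≤ g i)).card ≤ K)).card ≤ K := by
  classical
  set Nf : Fin N → ℕ := fun i => (Finset.univ.filter (fun k => g k ≤ g i)).card with hNf
  have hpos : ∀ i, 1 ≤ Nf i := by
    intro i
    rw [hNf]
    exact Finset.card_pos.2 ⟨i, by simp⟩
  have hinj : ∀ i j, i ≠ j → Nf i ≠ Nf j := by
    intro i j hij
    rcases lt_trichotomy (g i) (g j) with h | h | h
    · exact Nat.ne_of_lt (rank_lt g h)
    · exact absurd h (hg i j hij)
    · exact (Nat.ne_of_lt (rank_lt g h)).symm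
  calc (Finset.univ.filter (fun i => Nf i ≤ K)).card
      ≤ (Finset.Icc 1 K).card := by
        apply Finset.card_le_card_of_injOn Nf
        · intro i hi
          have hi2 : Nf i ≤ K := by simpa using hi
          exact Finset.mem_coe.2 (Finset.mem_Icc.2 ⟨hpos i, hi2⟩)
        · intro i _ j _ hij
          by_contra hne
          exact hinj i j hne hij
    _ = K := by rw [Nat.card_Icc]; omega

lemma map_perm_eq_pi {Ω : Type*} [MeasurableSpace Ω] (P : Measure Ω) [IsProbabilityMeasure P]
    {β : Type*} [MeasurableSpace β] {N : ℕ} (Z : Fin (N+1) → Ω → β)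
    (hZmeas : ∀ i, Measurable (Z i))
    (hindep : iIndepFun Z P)
    (hident : ∀ i, IdentDistrib (Z i) (Z 0) P P)
    (σ : Equiv.Perm (Fin (N+1))) :
    Measure.map (fun ω i => Z (σ i) ω) P = Measure.pi (fun _ => P.map (Z 0)) := by
  have hprob : IsProbabilityMeasure (P.map (Z 0)) :=
    Measure.isProbabilityMeasure_map (hZmeas 0).aemeasurable
  refine (Measure.pi_eq ?_).symm
  intro s hs
  have hmv : Measurable (fun ω (i : Fin (N+1)) => Z (σ i) ω) :=
    measurable_pi_lambda _ (fun i => hZmeas (σ i))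
  rw [Measure.map_apply hmv (MeasurableSet.univ_pi hs)]
  have hpre : (fun ω (i : Fin (N+1)) => Z (σ i) ω) ⁻¹' (Set.univ.pi s)
      = ⋂ j ∈ Finset.univ, Z j ⁻¹' (s (σ.symm j)) := by
    ext ω
    simp only [Set.mem_preimage, Set.mem_pi, Set.mem_univ, true_implies, Set.mem_iInter,
      Finset.mem_univ, true_implies]
    constructor
    · intro h j
      have := h (σ.symm j)
      simpa using this
    · intro h i
      have := h (σ i)
      rwa [Equiv.symm_apply_apply] at this
  rw [hpre, hindep.measure_inter_preimage_eq_mul Finset.univ (fun j _ => hs (σ.symm j))]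
  have heach : ∀ j k, P (Z j ⁻¹' s k) = (P.map (Z 0)) (s k) := by
    intro j k
    rw [← (hident j).map_eq, Measure.map_apply (hZmeas j) (hs k)]
  calc ∏ j : Fin (N+1), P (Z j ⁻¹' s (σ.symm j))
      = ∏ j : Fin (N+1), (P.map (Z 0)) (s (σ.symm j)) := by
        exact Finset.prod_congr rfl (fun j _ => heach j (σ.symm j))
    _ = ∏ i : Fin (N+1), (P.map (Z 0)) (s i) :=
        Equiv.prod_comp σ.symm (fun k => (P.map (Z 0)) (s k))

lemma card_filter_cast {ι : Type*} [Fintype ι] (p : ι → Prop) [DecidablePred p] :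
    ((Finset.univ.filter p).card : ENNReal) = ∑ i, if p i then (1:ENNReal) else 0 := by
  rw [Finset.card_filter, Nat.cast_sum]
  refine Finset.sum_congr rfl fun i _ => ?_
  by_cases h : p i <;> simp [h]

lemma measurable_filter_card {V : Type*} [MeasurableSpace V] {ι : Type*} [Fintype ι]
    (p : ι → V → Prop) [∀ i v, Decidable (p i v)] (hp : ∀ i, MeasurableSet {v | p i v}) :
    Measurable (fun v => (Finset.univ.filter (fun i => p i v)).card) := by
  have h : (fun v => (Finset.univ.filter (fun i => p i v)).card)
      = fun v => ∑ i : ι, if p i v then 1 else 0 := by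
    funext v; rw [Finset.card_filter]
  rw [h]
  exact Finset.measurable_sum _
    (fun i _ => Measurable.ite (hp i) measurable_const measurable_const)

end Stmt18Aux


/-- **jackknife coverage upper bound for stable symmetric algorithms.**
Same setting as Statement 17: `n = m + 1 ≥ 2` training points `Z i.castSucc` and a test
point `(X, Y) = Z (last)`, all i.i.d.; `An`/`Am` a symmetric, jointly measurable algorithm;
`(ε, ν)`-stability holds. Additionally assume that, almost surely, the `n + 1` extended
leave-one-out errors `r̃ i = |(Z i).2 − An (data without i) ((Z i).1)|`, `i : Fin (m+2)`,
are pairwise distinct. Then for `1/(n+1) + √ν ≤ α < 1`,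
`P(|Y − f̂(X)| ≤ q_{n,α}{r i} − ε) ≤ 1 − α + 1/(n + 1) + 2√ν`. -/
theorem stmt18 {𝒳 : Type*} [MeasurableSpace 𝒳]
    {Ω : Type*} [MeasurableSpace Ω] (P : Measure Ω) [IsProbabilityMeasure P]
    (m : ℕ) (hm : 1 ≤ m)
    (An : (Fin (m+1) → 𝒳 × ℝ) → 𝒳 → ℝ)
    (Am : (Fin m → 𝒳 × ℝ) → 𝒳 → ℝ)
    (hAnMeas : Measurable (fun p : (Fin (m+1) → 𝒳 × ℝ) × 𝒳 => An p.1 p.2))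
    (hAmMeas : Measurable (fun p : (Fin m → 𝒳 × ℝ) × 𝒳 => Am p.1 p.2))
    (hAnSymm : ∀ σ : Equiv.Perm (Fin (m+1)), ∀ D, An (D ∘ σ) = An D)
    (hAmSymm : ∀ σ : Equiv.Perm (Fin m), ∀ D, Am (D ∘ σ) = Am D)
    (Z : Fin (m+2) → Ω → 𝒳 × ℝ)
    (hZmeas : ∀ i, Measurable (Z i))
    (hindep : iIndepFun Z P)
    (hident : ∀ i, IdentDistrib (Z i) (Z 0) P P)
    (ε ν : ℝ) (hε : 0 ≤ ε) (hν : ν ∈ Set.Ioo (0:ℝ) 1)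
    (hstable : ∀ i : Fin (m+1),
      P {ω | ε <
          |An (fun j : Fin (m+1) => Z j.castSucc ω) ((Z (Fin.last (m+1)) ω).1)
            - Am (fun j : Fin m => Z ((i.succAbove j).castSucc) ω)
                ((Z (Fin.last (m+1)) ω).1)|}
        ≤ ENNReal.ofReal ν)
    (hdistinct : ∀ᵐ ω ∂P, ∀ i j : Fin (m+2), i ≠ j →
      |(Z i ω).2 - An (fun k : Fin (m+1) => Z (i.succAbove k) ω) ((Z i ω).1)|
        ≠ |(Z j ω).2 - An (fun k : Fin (m+1) => Z (j.succAbove k) ω) ((Z j ω).1)|)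
    (α : ℝ) (hα1 : 1/((m:ℝ)+2) + Real.sqrt ν ≤ α) (hα2 : α < 1) :
    (P {ω |
        |(Z (Fin.last (m+1)) ω).2
            - An (fun j : Fin (m+1) => Z j.castSucc ω) ((Z (Fin.last (m+1)) ω).1)|
          ≤ empQuantile α
              (fun i : Fin (m+1) =>
                |(Z i.castSucc ω).2
                  - Am (fun j : Fin m => Z ((i.succAbove j).castSucc) ω)
                      ((Z i.castSucc ω).1)|)
            - ε}).toReal
      ≤ 1 - α + 1/((m:ℝ)+2) + 2 * Real.sqrt ν := by
  classical
  obtain ⟨hν0, hν1⟩ := hν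
  have hm2 : (0:ℝ) < (m:ℝ) + 2 := by positivity
  have hsν : 0 < Real.sqrt ν := Real.sqrt_pos.2 hν0
  -- the pushforward product measure
  set μ0 : Measure (𝒳 × ℝ) := P.map (Z 0) with hμ0
  have hμ0prob : IsProbabilityMeasure μ0 :=
    MeasureTheory.Measure.isProbabilityMeasure_map (hZmeas 0).aemeasurable
  set Q : Measure (Fin (m+2) → 𝒳 × ℝ) := Measure.pi (fun _ => μ0) with hQdef
  have hQprob : IsProbabilityMeasure Q := by rw [hQdef]; infer_instance
  set Zv : Ω → (Fin (m+2) → 𝒳 × ℝ) := fun ω i => Z i ω with hZvdef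
  have hZvmeas : Measurable Zv := measurable_pi_lambda _ hZmeas
  have hmap : ∀ σ : Equiv.Perm (Fin (m+2)),
      Measure.map (fun ω i => Z (σ i) ω) P = Q :=
    fun σ => Stmt18Aux.map_perm_eq_pi P Z hZmeas hindep hident σ
  have hmapid : Measure.map Zv P = Q := hmap (Equiv.refl _)
  have hcompmeas : ∀ σ : Equiv.Perm (Fin (m+2)),
      Measurable (fun v : Fin (m+2) → 𝒳 × ℝ => v ∘ σ) :=
    fun σ => measurable_pi_lambda _ (fun i => measurable_pi_apply (σ i))
  have hQinv : ∀ σ : Equiv.Perm (Fin (m+2)),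
      Measure.map (fun v : Fin (m+2) → 𝒳 × ℝ => v ∘ σ) Q = Q := by
    intro σ
    rw [← hmapid, Measure.map_map (hcompmeas σ) hZvmeas]
    have h1 : ((fun v : Fin (m+2) → 𝒳 × ℝ => v ∘ σ) ∘ Zv) = (fun ω i => Z (σ i) ω) := rfl
    rw [h1, hmap σ, hmapid]
  have hQpre : ∀ σ : Equiv.Perm (Fin (m+2)), ∀ A : Set (Fin (m+2) → 𝒳 × ℝ),
      MeasurableSet A → Q ((fun v => v ∘ σ) ⁻¹' A) = Q A := by
    intro σ A hA
    rw [← Measure.map_apply (hcompmeas σ) hA, hQinv σ]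
  have hPQ : ∀ A : Set (Fin (m+2) → 𝒳 × ℝ), MeasurableSet A → P (Zv ⁻¹' A) = Q A := by
    intro A hA
    rw [← hmapid, Measure.map_apply hZvmeas hA]
  -- error functionals
  set F : (Fin (m+2) → 𝒳 × ℝ) → Fin (m+2) → ℝ :=
    fun v i => Stmt18Aux.extErr An v i with hFdef
  have hFmeas : ∀ i, Measurable (fun v => F v i) :=
    fun i => Stmt18Aux.extErr_meas An hAnMeas i
  have hFperm : ∀ (σ : Equiv.Perm (Fin (m+2))) v i, F (fun j => v (σ j)) i = F v (σ i) :=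
    fun σ v i => Stmt18Aux.extErr_comp_perm An hAnSymm σ v i
  set g : (Fin (m+2) → 𝒳 × ℝ) → Fin (m+1) → ℝ :=
    fun v i => |(v i.castSucc).2
      - Am (fun j => v ((i.succAbove j).castSucc)) ((v i.castSucc).1)| with hgdef
  have hgmeas : ∀ i, Measurable (fun v => g v i) := by
    intro i
    have h1 : Measurable (fun v : Fin (m+2) → 𝒳 × ℝ => v i.castSucc) := measurable_pi_apply _
    have h2 : Measurable (fun v : Fin (m+2) → 𝒳 × ℝ =>
        ((fun j => v ((i.succAbove j).castSucc)), (v i.castSucc).1)) :=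
      (measurable_pi_lambda _ (fun j => measurable_pi_apply _)).prodMk h1.fst
    exact (h1.snd.sub (hAmMeas.comp h2)).abs
  -- constants
  set k : ℕ := ⌈(1 - α) * ((m:ℝ) + 2)⌉₊ with hkdef
  set c : ℕ := ⌈((m:ℝ) + 2) * Real.sqrt ν⌉₊ with hcdef
  set K : ℕ := k + (c - 1) with hKdef
  have hα0 : 0 < 1 - α := by linarith
  have hone : (1/((m:ℝ)+2)) * ((m:ℝ)+2) = 1 := by field_simp
  have hk1 : 1 ≤ k := by
    rw [hkdef]
    exact Nat.ceil_pos.2 (by positivity)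
  have hk2 : k ≤ m + 1 := by
    rw [hkdef, Nat.ceil_le]
    push_cast
    nlinarith [Real.sqrt_nonneg ν, hα1]
  have hc1 : 1 ≤ c := by
    rw [hcdef]
    exact Nat.ceil_pos.2 (by positivity)
  -- distinctness event
  set D : Set (Fin (m+2) → 𝒳 × ℝ) := {v | ∀ i j, i ≠ j → F v i ≠ F v j} with hDdef
  have hDmeas : MeasurableSet D := by
    have hD2 : D = ⋂ (i : Fin (m+2)) (j : Fin (m+2)), {v | i ≠ j → F v i ≠ F v j} := by
      ext v; simp only [hDdef, Set.mem_setOf_eq, Set.mem_iInter]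
    rw [hD2]
    refine MeasurableSet.iInter fun i => MeasurableSet.iInter fun j => ?_
    by_cases hij : i = j
    · simp [hij]
    · have h3 : {v | i ≠ j → F v i ≠ F v j}
          = {v : Fin (m+2) → 𝒳 × ℝ | F v i = F v j}ᶜ := by
        ext v; simp [hij]
      rw [h3]
      exact (measurableSet_eq_fun (hFmeas i) (hFmeas j)).compl
  have hDc : Q Dᶜ = 0 := by
    rw [← hPQ _ hDmeas.compl]
    have h4 : Zv ⁻¹' Dᶜ = {ω | ¬ ∀ i j, i ≠ j → F (Zv ω) i ≠ F (Zv ω) j} := rfl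
    rw [h4, ← ae_iff]
    exact hdistinct.mono fun ω h i j hij => h i j hij
  -- stability events
  set S : Fin (m+1) → Set (Fin (m+2) → 𝒳 × ℝ) := fun i => {v | ε <
      |An (fun j : Fin (m+1) => v j.castSucc) ((v (Fin.last (m+1))).1)
        - Am (fun j : Fin m => v ((i.succAbove j).castSucc))
            ((v (Fin.last (m+1))).1)|} with hSdef
  have hSmeas : ∀ i, MeasurableSet (S i) := by
    intro i
    have h1 : Measurable (fun v : Fin (m+2) → 𝒳 × ℝ => v (Fin.last (m+1))) :=
      measurable_pi_apply _
    have hp1 : Measurable (fun v : Fin (m+2) → 𝒳 × ℝ =>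
        ((fun j : Fin (m+1) => v j.castSucc), (v (Fin.last (m+1))).1)) :=
      (measurable_pi_lambda _ (fun j => measurable_pi_apply j.castSucc)).prodMk h1.fst
    have hp2 : Measurable (fun v : Fin (m+2) → 𝒳 × ℝ =>
        ((fun j : Fin m => v ((i.succAbove j).castSucc)), (v (Fin.last (m+1))).1)) :=
      (measurable_pi_lambda _
        (fun j => measurable_pi_apply ((i.succAbove j).castSucc))).prodMk h1.fst
    exact measurableSet_lt measurable_const
      ((hAnMeas.comp hp1).sub (hAmMeas.comp hp2)).abs
  have hSQ : ∀ i, Q (S i) ≤ ENNReal.ofReal ν := by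
    intro i
    rw [← hPQ _ (hSmeas i)]
    exact hstable i
  -- swapped stability events
  set S' : Fin (m+1) → Set (Fin (m+2) → 𝒳 × ℝ) := fun i => {v | ε <
      |An (fun kk : Fin (m+1) => v ((i.castSucc : Fin (m+2)).succAbove kk)) ((v i.castSucc).1)
        - Am (fun j : Fin m => v ((i.succAbove j).castSucc)) ((v i.castSucc).1)|} with hS'def
  have hS'Q : ∀ i, Q (S' i) ≤ ENNReal.ofReal ν := by
    intro i
    set τ : Equiv.Perm (Fin (m+2)) :=
      Equiv.swap (i.castSucc : Fin (m+2)) (Fin.last (m+1)) with hτ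
    have hτlast : τ (Fin.last (m+1)) = i.castSucc := Equiv.swap_apply_right _ _
    obtain ⟨π, hπ⟩ := Stmt18Aux.exists_perm_succAbove
      (fun j : Fin (m+1) => τ j.castSucc)
      (τ.injective.comp (Fin.castSucc_injective (m+1)))
      (i.castSucc : Fin (m+2))
      (by
        intro j hc
        have h5 : τ (j.castSucc) = τ (Fin.last (m+1)) := by rw [hτlast]; exact hc
        exact absurd (τ.injective h5) (Fin.castSucc_lt_last j).ne)
    have hpre : (fun v : Fin (m+2) → 𝒳 × ℝ => v ∘ τ) ⁻¹' (S i) = S' i := by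
      ext v
      simp only [Set.mem_preimage, hSdef, hS'def, Set.mem_setOf_eq]
      have c1 : (v ∘ ⇑τ) (Fin.last (m+1)) = v i.castSucc := by
        simp only [Function.comp_apply, hτlast]
      have c2 : (fun j : Fin (m+1) => (v ∘ ⇑τ) j.castSucc)
          = (fun kk : Fin (m+1) => v ((i.castSucc : Fin (m+2)).succAbove kk)) ∘ π := by
        funext j
        simp only [Function.comp_apply]
        exact congrArg v (hπ j)
      have c3 : (fun j : Fin m => (v ∘ ⇑τ) ((i.succAbove j).castSucc))
          = fun j : Fin m => v ((i.succAbove j).castSucc) := by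
        funext j
        simp only [Function.comp_apply]
        congr 1
        apply Equiv.swap_apply_of_ne_of_ne
        · exact fun hc => Fin.succAbove_ne i j (Fin.castSucc_injective _ hc)
        · exact (Fin.castSucc_lt_last _).ne
      rw [c1, c2, hAnSymm, c3]
    calc Q (S' i) = Q (S i) := by rw [← hpre]; exact hQpre τ _ (hSmeas i)
      _ ≤ ENNReal.ofReal ν := hSQ i
  -- bad events
  set bad : Fin (m+1) → Set (Fin (m+2) → 𝒳 × ℝ) :=
    fun i => {v | ¬ (g v i ≤ F v i.castSucc + ε)} with hbaddef
  have hbadmeas : ∀ i, MeasurableSet (bad i) := fun i =>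
    (measurableSet_le (hgmeas i) ((hFmeas i.castSucc).add measurable_const)).compl
  have hbadQ : ∀ i, Q (bad i) ≤ ENNReal.ofReal ν := by
    intro i
    refine le_trans (measure_mono ?_) (hS'Q i)
    intro v hv
    simp only [hbaddef, Set.mem_setOf_eq, not_le] at hv
    simp only [hS'def, Set.mem_setOf_eq]
    have h1 : g v i = |(v i.castSucc).2
        - Am (fun j => v ((i.succAbove j).castSucc)) ((v i.castSucc).1)| := rfl
    have h2 : F v i.castSucc = |(v i.castSucc).2
        - An (fun kk : Fin (m+1) => v ((i.castSucc : Fin (m+2)).succAbove kk))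
          ((v i.castSucc).1)| := rfl
    have htri := abs_sub_abs_le_abs_sub
      ((v i.castSucc).2 - Am (fun j => v ((i.succAbove j).castSucc)) ((v i.castSucc).1))
      ((v i.castSucc).2 - An (fun kk : Fin (m+1) =>
        v ((i.castSucc : Fin (m+2)).succAbove kk)) ((v i.castSucc).1))
    have hdiff : ((v i.castSucc).2
          - Am (fun j => v ((i.succAbove j).castSucc)) ((v i.castSucc).1))
        - ((v i.castSucc).2 - An (fun kk : Fin (m+1) =>
            v ((i.castSucc : Fin (m+2)).succAbove kk)) ((v i.castSucc).1))
        = An (fun kk : Fin (m+1) => v ((i.castSucc : Fin (m+2)).succAbove kk))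
            ((v i.castSucc).1)
          - Am (fun j => v ((i.succAbove j).castSucc)) ((v i.castSucc).1) := by ring
    rw [hdiff] at htri
    rw [h1, h2] at hv
    linarith [htri, hv]
  -- number of bad indices
  set Bcard : (Fin (m+2) → 𝒳 × ℝ) → ℕ :=
    fun v => (Finset.univ.filter (fun i : Fin (m+1) => v ∈ bad i)).card with hBdef
  have hBmeas : Measurable Bcard :=
    Stmt18Aux.measurable_filter_card _ (fun i => hbadmeas i)
  set BadSet : Set (Fin (m+2) → 𝒳 × ℝ) := {v | c ≤ Bcard v} with hBadSetdef
  have hBadSetmeas : MeasurableSet BadSet := by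
    have hBS : BadSet = Bcard ⁻¹' Set.Ici c := rfl
    rw [hBS]
    exact hBmeas MeasurableSpace.measurableSet_top
  have hBE : Measurable (fun v => (Bcard v : ENNReal)) := measurable_from_top.comp hBmeas
  have hlint : ∫⁻ v, (Bcard v : ENNReal) ∂Q ≤ ((m+1 : ℕ) : ENNReal) * ENNReal.ofReal ν := by
    have h1 : ∀ v, (Bcard v : ENNReal)
        = ∑ i : Fin (m+1), (bad i).indicator (fun _ => (1:ENNReal)) v := by
      intro v
      rw [hBdef, Stmt18Aux.card_filter_cast]
      refine Finset.sum_congr rfl fun i _ => ?_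
      by_cases h : v ∈ bad i <;> simp [h]
    calc ∫⁻ v, (Bcard v : ENNReal) ∂Q
        = ∫⁻ v, ∑ i : Fin (m+1), (bad i).indicator (fun _ => (1:ENNReal)) v ∂Q :=
          lintegral_congr h1
      _ = ∑ i : Fin (m+1), ∫⁻ v, (bad i).indicator (fun _ => (1:ENNReal)) v ∂Q :=
          lintegral_finset_sum _ (fun i _ => measurable_const.indicator (hbadmeas i))
      _ = ∑ i : Fin (m+1), Q (bad i) := by
          refine Finset.sum_congr rfl fun i _ => ?_
          rw [lintegral_indicator (hbadmeas i), setLIntegral_one]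
      _ ≤ ∑ _i : Fin (m+1), ENNReal.ofReal ν := Finset.sum_le_sum fun i _ => hbadQ i
      _ = ((m+1 : ℕ) : ENNReal) * ENNReal.ofReal ν := by
          rw [Finset.sum_const, Finset.card_univ, Fintype.card_fin, nsmul_eq_mul]
  have hMarkov : Q BadSet ≤ ENNReal.ofReal (Real.sqrt ν) := by
    have h0 := MeasureTheory.mul_meas_ge_le_lintegral₀ (μ := Q) hBE.aemeasurable ((c:ℕ) : ENNReal)
    have hset : {v | ((c:ℕ):ENNReal) ≤ (Bcard v : ENNReal)} = BadSet := by
      ext v; simp [hBadSetdef, Nat.cast_le]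
    rw [hset] at h0
    have h4 : ((c:ℕ):ENNReal) * Q BadSet ≤ ((m+1:ℕ):ENNReal) * ENNReal.ofReal ν :=
      le_trans h0 hlint
    have h5 : ((m+1:ℕ):ENNReal) * ENNReal.ofReal ν
        ≤ ((c:ℕ):ENNReal) * ENNReal.ofReal (Real.sqrt ν) := by
      have hcge : ENNReal.ofReal (((m:ℝ)+2) * Real.sqrt ν) ≤ ((c:ℕ):ENNReal) := by
        rw [← ENNReal.ofReal_natCast]
        exact ENNReal.ofReal_le_ofReal (Nat.le_ceil _)
      calc ((m+1:ℕ):ENNReal) * ENNReal.ofReal ν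
          = ENNReal.ofReal (((m+1:ℕ):ℝ) * ν) := by
            rw [ENNReal.ofReal_mul (by positivity), ENNReal.ofReal_natCast]
        _ ≤ ENNReal.ofReal ((((m:ℝ)+2) * Real.sqrt ν) * Real.sqrt ν) := by
            apply ENNReal.ofReal_le_ofReal
            have hss : Real.sqrt ν * Real.sqrt ν = ν := Real.mul_self_sqrt hν0.le
            push_cast
            nlinarith [hss, hsν]
        _ = ENNReal.ofReal (((m:ℝ)+2) * Real.sqrt ν) * ENNReal.ofReal (Real.sqrt ν) := by
            rw [← ENNReal.ofReal_mul (by positivity)]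
        _ ≤ ((c:ℕ):ENNReal) * ENNReal.ofReal (Real.sqrt ν) := mul_le_mul_left hcge _
    have hcne : ((c:ℕ):ENNReal) ≠ 0 := by
      simp only [ne_eq, Nat.cast_eq_zero]
      omega
    have hctop : ((c:ℕ):ENNReal) ≠ ⊤ := ENNReal.natCast_ne_top c
    exact (ENNReal.mul_le_mul_iff_right hcne hctop).1 (le_trans h4 h5)
  -- rank events
  set NKset : Fin (m+2) → Set (Fin (m+2) → 𝒳 × ℝ) := fun i =>
    {v | (Finset.univ.filter (fun j : Fin (m+2) => F v j ≤ F v i)).card ≤ K} with hNKdef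
  have hNmeas : ∀ i : Fin (m+2), Measurable (fun v =>
      (Finset.univ.filter (fun j : Fin (m+2) => F v j ≤ F v i)).card) :=
    fun i => Stmt18Aux.measurable_filter_card _
      (fun j => measurableSet_le (hFmeas j) (hFmeas i))
  have hNKmeas : ∀ i, MeasurableSet (NKset i) := by
    intro i
    have hNS : NKset i = (fun v =>
        (Finset.univ.filter (fun j : Fin (m+2) => F v j ≤ F v i)).card) ⁻¹' Set.Iic K := rfl
    rw [hNS]
    exact (hNmeas i) MeasurableSpace.measurableSet_top
  have hNKeq : ∀ i, Q (NKset i) = Q (NKset (Fin.last (m+1))) := by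
    intro i
    set σ := Equiv.swap i (Fin.last (m+1) : Fin (m+2)) with hσ
    have hlastv : σ (Fin.last (m+1)) = i := Equiv.swap_apply_right _ _
    have hpre : (fun v : Fin (m+2) → 𝒳 × ℝ => v ∘ σ) ⁻¹' (NKset (Fin.last (m+1)))
        = NKset i := by
      ext v
      simp only [hNKdef, Set.mem_preimage, Set.mem_setOf_eq]
      have hFc : ∀ j, F (v ∘ ⇑σ) j = F v (σ j) := by
        intro j
        have hvc : (v ∘ ⇑σ) = fun jj => v (σ jj) := rfl
        rw [hvc]
        exact hFperm σ v j
      have hcount : (Finset.univ.filter (fun j : Fin (m+2) =>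
            F (v ∘ ⇑σ) j ≤ F (v ∘ ⇑σ) (Fin.last (m+1)))).card
          = (Finset.univ.filter (fun j : Fin (m+2) => F v j ≤ F v i)).card := by
        refine Finset.card_bij (fun j _ => σ j) ?_ ?_ ?_
        · intro j hj
          simp only [Finset.mem_filter, Finset.mem_univ, true_and] at hj ⊢
          rwa [hFc j, hFc (Fin.last (m+1)), hlastv] at hj
        · intro a _ b _ hab; exact σ.injective hab
        · intro b hb
          refine ⟨σ.symm b, ?_, by simp⟩
          simp only [Finset.mem_filter, Finset.mem_univ, true_and] at hb ⊢
          rw [hFc (σ.symm b), hFc (Fin.last (m+1)), hlastv, Equiv.apply_symm_apply]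
          exact hb
      rw [hcount]
    rw [← hpre]
    exact hQpre σ _ (hNKmeas (Fin.last (m+1)))
  have hrank : Q (NKset (Fin.last (m+1))) ≤ (K : ENNReal) / ((m+2 : ℕ) : ENNReal) := by
    have hsum : ∑ i : Fin (m+2), Q (NKset i) ≤ (K : ENNReal) := by
      have h1 : ∑ i : Fin (m+2), Q (NKset i)
          = ∫⁻ v, ∑ i : Fin (m+2), (NKset i).indicator (fun _ => (1:ENNReal)) v ∂Q := by
        rw [lintegral_finset_sum _ (fun i _ => measurable_const.indicator (hNKmeas i))]
        refine Finset.sum_congr rfl fun i _ => ?_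
        rw [lintegral_indicator (hNKmeas i), setLIntegral_one]
      rw [h1]
      have hDae : ∀ᵐ v ∂Q, v ∈ D := by
        rw [ae_iff]
        exact hDc
      have h2 : ∀ᵐ v ∂Q, ∑ i : Fin (m+2), (NKset i).indicator (fun _ => (1:ENNReal)) v
          ≤ (K:ENNReal) := by
        filter_upwards [hDae] with v hvD
        have h3 : ∑ i : Fin (m+2), (NKset i).indicator (fun _ => (1:ENNReal)) v
            = ((Finset.univ.filter (fun i : Fin (m+2) => v ∈ NKset i)).card : ENNReal) := by
          rw [Stmt18Aux.card_filter_cast]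
          refine Finset.sum_congr rfl fun i _ => ?_
          by_cases h : v ∈ NKset i <;> simp [h]
        rw [h3]
        have hfe : Finset.univ.filter (fun i : Fin (m+2) => v ∈ NKset i)
            = Finset.univ.filter (fun i : Fin (m+2) =>
                (Finset.univ.filter (fun j : Fin (m+2) => F v j ≤ F v i)).card ≤ K) := by
          apply Finset.filter_congr
          intro i _
          simp [hNKdef]
        rw [hfe]
        exact_mod_cast Stmt18Aux.card_small_rank (fun j => F v j) hvD K
      calc ∫⁻ v, ∑ i : Fin (m+2), (NKset i).indicator (fun _ => (1:ENNReal)) v ∂Q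
          ≤ ∫⁻ _v, (K:ENNReal) ∂Q := lintegral_mono_ae h2
        _ = (K:ENNReal) := by simp [lintegral_const]
    have hconst : ∑ i : Fin (m+2), Q (NKset i)
        = ((m+2:ℕ):ENNReal) * Q (NKset (Fin.last (m+1))) := by
      rw [Finset.sum_congr rfl (fun i _ => hNKeq i), Finset.sum_const, Finset.card_univ,
        Fintype.card_fin, nsmul_eq_mul]
    rw [ENNReal.le_div_iff_mul_le (Or.inl (by simp)) (Or.inl (ENNReal.natCast_ne_top _))]
    rw [mul_comm]
    rw [← hconst]
    exact hsum
  -- empQuantile rewriting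
  have hksm : ∀ w : Fin (m+1) → ℝ, empQuantile α w = kthSmallest k w := by
    intro w
    unfold empQuantile
    rw [hkdef]
    congr 2
    push_cast
    ring
  -- the inclusion
  have hincl : {ω |
        |(Z (Fin.last (m+1)) ω).2
            - An (fun j : Fin (m+1) => Z j.castSucc ω) ((Z (Fin.last (m+1)) ω).1)|
          ≤ empQuantile α
              (fun i : Fin (m+1) =>
                |(Z i.castSucc ω).2
                  - Am (fun j : Fin m => Z ((i.succAbove j).castSucc) ω)
                      ((Z i.castSucc ω).1)|)
            - ε}
      ⊆ (Zv ⁻¹' Dᶜ) ∪ (Zv ⁻¹' BadSet ∪ Zv ⁻¹' (NKset (Fin.last (m+1)))) := by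
    intro ω hω
    by_cases hvD : Zv ω ∈ D
    swap
    · exact Or.inl hvD
    right
    by_cases hvB : Zv ω ∈ BadSet
    · exact Or.inl hvB
    right
    simp only [Set.mem_setOf_eq] at hω
    set v := Zv ω with hv
    have hFlast : F v (Fin.last (m+1))
        = |(Z (Fin.last (m+1)) ω).2
            - An (fun j : Fin (m+1) => Z j.castSucc ω) ((Z (Fin.last (m+1)) ω).1)| := by
      show Stmt18Aux.extErr An v (Fin.last (m+1)) = _
      unfold Stmt18Aux.extErr
      have harg : (fun kk : Fin (m+1) => v ((Fin.last (m+1)).succAbove kk))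
          = fun j : Fin (m+1) => Z j.castSucc ω := by
        funext kk
        rw [Fin.succAbove_last]
      rw [harg]
    have hgv : (fun i : Fin (m+1) => g v i)
        = fun i : Fin (m+1) =>
            |(Z i.castSucc ω).2
              - Am (fun j : Fin m => Z ((i.succAbove j).castSucc) ω)
                  ((Z i.castSucc ω).1)| := rfl
    have hEv : F v (Fin.last (m+1)) ≤ kthSmallest k (fun i => g v i) - ε := by
      rw [hFlast, ← hksm]
      rw [hgv]
      exact hω
    have hBle : Bcard v ≤ c - 1 := by
      simp only [hBadSetdef, Set.mem_setOf_eq, not_le] at hvB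
      omega
    show v ∈ NKset (Fin.last (m+1))
    simp only [hNKdef, Set.mem_setOf_eq]
    by_cases hcase : k + Bcard v ≤ m + 1
    · -- main case: use the shift lemma
      have hBB : (Finset.univ.filter (fun i : Fin (m+1) =>
            ¬ ((fun i => g v i) i ≤ (fun i => F v i.castSucc) i + ε))).card ≤ Bcard v := by
        apply le_of_eq
        apply congrArg Finset.card
        apply Finset.filter_congr
        intro i _
        simp [hbaddef]
      have hshift := Stmt18Aux.kthSmallest_shift (fun i => g v i)
        (fun i : Fin (m+1) => F v i.castSucc) ε hk1 hcase hBB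
      set t' := kthSmallest (k + Bcard v) (fun i : Fin (m+1) => F v i.castSucc) with ht'
      have hvt : F v (Fin.last (m+1)) ≤ t' := by linarith [hEv, hshift]
      have hsub : Finset.univ.filter (fun j : Fin (m+2) => F v j ≤ F v (Fin.last (m+1)))
          ⊆ insert (Fin.last (m+1))
            ((Finset.univ.filter (fun i : Fin (m+1) => F v i.castSucc < t')).image
              Fin.castSucc) := by
        intro j hj
        simp only [Finset.mem_filter, Finset.mem_univ, true_and] at hj
        by_cases hjl : j = Fin.last (m+1)
        · simp [hjl]
        · obtain ⟨i0, hi0⟩ := Fin.exists_castSucc_eq.2 hjl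
          apply Finset.mem_insert_of_mem
          rw [Finset.mem_image]
          refine ⟨i0, ?_, hi0⟩
          simp only [Finset.mem_filter, Finset.mem_univ, true_and]
          have hne : F v j ≠ F v (Fin.last (m+1)) := hvD j (Fin.last (m+1)) hjl
          have hlt : F v j < F v (Fin.last (m+1)) := lt_of_le_of_ne hj hne
          rw [hi0]
          exact lt_of_lt_of_le hlt hvt
      have hcards : (Finset.univ.filter
            (fun j : Fin (m+2) => F v j ≤ F v (Fin.last (m+1)))).card
          ≤ 1 + (Finset.univ.filter (fun i : Fin (m+1) => F v i.castSucc < t')).card := by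
        calc _ ≤ (insert (Fin.last (m+1))
              ((Finset.univ.filter (fun i : Fin (m+1) => F v i.castSucc < t')).image
                Fin.castSucc)).card := Finset.card_le_card hsub
          _ ≤ ((Finset.univ.filter (fun i : Fin (m+1) => F v i.castSucc < t')).image
                Fin.castSucc).card + 1 := Finset.card_insert_le _ _
          _ ≤ (Finset.univ.filter (fun i : Fin (m+1) => F v i.castSucc < t')).card + 1 := by
              have := Finset.card_image_le (s := Finset.univ.filter
                (fun i : Fin (m+1) => F v i.castSucc < t'))
                (f := Fin.castSucc)
              omega
          _ = 1 + _ := by omega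
      have hlt' := Stmt18Aux.card_lt_kthSmallest (fun i : Fin (m+1) => F v i.castSucc)
        (k := k + Bcard v) (by omega) hcase
      rw [← ht'] at hlt'
      have hlt'' : (Finset.univ.filter (fun i : Fin (m+1) => F v i.castSucc < t')).card
          ≤ k + Bcard v - 1 := hlt'
      have hKK : K = k + (c - 1) := hKdef
      omega
    · -- degenerate case
      have hcap : (Finset.univ.filter
            (fun j : Fin (m+2) => F v j ≤ F v (Fin.last (m+1)))).card ≤ m + 2 := by
        calc _ ≤ (Finset.univ : Finset (Fin (m+2))).card := Finset.card_filter_le _ _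
          _ = m + 2 := by simp
      have hKK : K = k + (c - 1) := hKdef
      omega
  -- put everything together
  have hRHS0 : 0 ≤ 1 - α + 1/((m:ℝ)+2) + 2 * Real.sqrt ν := by
    have h6 : 0 ≤ 1/((m:ℝ)+2) := by positivity
    nlinarith [Real.sqrt_nonneg ν]
  refine ENNReal.toReal_le_of_le_ofReal hRHS0 ?_
  have hKreal : (K:ℝ) ≤ (1-α)*((m:ℝ)+2) + 1 + ((m:ℝ)+2) * Real.sqrt ν := by
    have hkr : (k:ℝ) ≤ (1-α)*((m:ℝ)+2) + 1 := by
      rw [hkdef]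
      exact (Nat.ceil_lt_add_one (by positivity)).le
    have hcr : ((c - 1 : ℕ):ℝ) ≤ ((m:ℝ)+2) * Real.sqrt ν := by
      have h7 : ((c:ℕ):ℝ) < ((m:ℝ)+2) * Real.sqrt ν + 1 := by
        rw [hcdef]
        exact Nat.ceil_lt_add_one (by positivity)
      have h8 : ((c - 1 : ℕ):ℝ) = (c:ℝ) - 1 := by
        have : (1:ℕ) ≤ c := hc1
        push_cast [Nat.cast_sub this]
        ring
      rw [h8]
      linarith
    have h9 : (K:ℝ) = (k:ℝ) + ((c-1:ℕ):ℝ) := by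
      rw [hKdef]
      push_cast
      ring
    rw [h9]
    linarith
  have hdivK : (K : ENNReal) / ((m+2 : ℕ) : ENNReal)
      = ENNReal.ofReal ((K:ℝ) / ((m:ℝ)+2)) := by
    rw [ENNReal.ofReal_div_of_pos hm2]
    congr 1
    · rw [ENNReal.ofReal_natCast]
    · have h10 : (m:ℝ)+2 = ((m+2:ℕ):ℝ) := by push_cast; ring
      rw [h10, ENNReal.ofReal_natCast]
  calc P {ω |
        |(Z (Fin.last (m+1)) ω).2
            - An (fun j : Fin (m+1) => Z j.castSucc ω) ((Z (Fin.last (m+1)) ω).1)|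
          ≤ empQuantile α
              (fun i : Fin (m+1) =>
                |(Z i.castSucc ω).2
                  - Am (fun j : Fin m => Z ((i.succAbove j).castSucc) ω)
                      ((Z i.castSucc ω).1)|)
            - ε}
      ≤ P ((Zv ⁻¹' Dᶜ) ∪ (Zv ⁻¹' BadSet ∪ Zv ⁻¹' (NKset (Fin.last (m+1))))) :=
        measure_mono hincl
    _ ≤ P (Zv ⁻¹' Dᶜ) + P (Zv ⁻¹' BadSet ∪ Zv ⁻¹' (NKset (Fin.last (m+1)))) :=
        measure_union_le _ _
    _ ≤ P (Zv ⁻¹' Dᶜ) + (P (Zv ⁻¹' BadSet) + P (Zv ⁻¹' (NKset (Fin.last (m+1))))) :=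
        add_le_add_right (measure_union_le _ _) _
    _ = 0 + (Q BadSet + Q (NKset (Fin.last (m+1)))) := by
        rw [hPQ _ hDmeas.compl, hPQ _ hBadSetmeas, hPQ _ (hNKmeas _), hDc]
    _ ≤ 0 + (ENNReal.ofReal (Real.sqrt ν) + ENNReal.ofReal ((K:ℝ) / ((m:ℝ)+2))) := by
        refine add_le_add_right (add_le_add hMarkov ?_) _
        rw [← hdivK]
        exact hrank
    _ = ENNReal.ofReal (Real.sqrt ν + (K:ℝ) / ((m:ℝ)+2)) := by
        rw [zero_add, ← ENNReal.ofReal_add (Real.sqrt_nonneg _) (by positivity)]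
    _ ≤ ENNReal.ofReal (1 - α + 1/((m:ℝ)+2) + 2 * Real.sqrt ν) := by
        apply ENNReal.ofReal_le_ofReal
        have h11 : (K:ℝ) / ((m:ℝ)+2) ≤ (1-α) + 1/((m:ℝ)+2) + Real.sqrt ν := by
          rw [div_le_iff₀ hm2]
          have h12 : (1/((m:ℝ)+2)) * ((m:ℝ)+2) = 1 := hone
          nlinarith [hKreal]
        linarith
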